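/- If λ > λ_s := sqrt((k-1)^{k-1}/(k(k-2)^{k-2})), then the polynomial h(q) = λ²k q^{k-1} - λ²k q^k - q has exactly two zeros q_u < q_s in (0,1), and these satisfy q_u < (k-2)/(k-1) < q_s. -/

import Mathlib

set_option maxHeartbeats 1000000


theorem stmt_3 (k : ℕ) (hk : 3 ≤ k) (lam : ℝ)
    (hlam : Real.sqrt (((k : ℝ) - 1) ^ (k - 1) / ((k : ℝ) * ((k : ℝ) - 2) ^ (k - 2))) < lam)
    (h : ℝ → ℝ) (hh : h = fun q : ℝ => lam ^ 2 * k * q ^ (k - 1) - lam ^ 2 * k * q ^ k - q) :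
    ∃ qu qs : ℝ, qu ∈ Set.Ioo (0 : ℝ) 1 ∧ qs ∈ Set.Ioo (0 : ℝ) 1 ∧ qu < qs ∧
      h qu = 0 ∧ h qs = 0 ∧
      qu < ((k : ℝ) - 2) / ((k : ℝ) - 1) ∧ ((k : ℝ) - 2) / ((k : ℝ) - 1) < qs ∧
      ∀ q ∈ Set.Ioo (0 : ℝ) 1, h q = 0 → q = qu ∨ q = qs := by
  obtain ⟨m, rfl⟩ : ∃ m : ℕ, k = m + 2 := ⟨k - 2, by omega⟩
  have hm : 1 ≤ m := by omega
  set M : ℝ := (m : ℝ) with hMdef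
  have hM1 : (1:ℝ) ≤ M := by rw [hMdef]; exact_mod_cast hm
  have hM0 : (0:ℝ) < M := by linarith
  have hkn1 : m + 2 - 1 = m + 1 := by omega
  have hkn2 : m + 2 - 2 = m := by omega
  simp only [hkn1, hkn2] at hlam
  push_cast at hlam
  have hsub1 : (M + 2) - 1 = M + 1 := by ring
  have hsub2 : (M + 2) - 2 = M := by ring
  rw [hsub1, hsub2] at hlam
  -- lam bounds
  set A : ℝ := (M + 1) ^ (m + 1) / ((M + 2) * M ^ m) with hAdef
  have hApos : 0 < A := by positivity
  have hlam2 : A < lam ^ 2 := by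
    nlinarith [Real.sq_sqrt hApos.le, Real.sqrt_nonneg A, hlam]
  have hlam0 : 0 < lam := lt_of_le_of_lt (Real.sqrt_nonneg A) hlam
  set L : ℝ := lam ^ 2 * (M + 2) with hLdef
  have hL0 : 0 < L := by positivity
  set c : ℝ := 1 / L with hcdef
  have hc0 : 0 < c := by positivity
  set a : ℝ := M / (M + 1) with hadef
  have ha0 : 0 < a := by positivity
  have ha1 : a < 1 := by
    rw [hadef, div_lt_one (by linarith)]; linarith
  set g : ℝ → ℝ := fun q => q ^ m - q ^ (m + 1) with hgdef
  -- relation between h and g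
  have hrel : ∀ q : ℝ, h q = q * (L * g q - 1) := by
    intro q
    rw [hh]
    simp only [hkn1, hgdef, hLdef]
    push_cast
    ring
  -- g a value
  have hga : g a = M ^ m / (M + 1) ^ (m + 1) := by
    rw [hgdef, hadef]
    simp only
    rw [div_pow, div_pow]
    rw [pow_succ M m, pow_succ (M+1) m]
    field_simp
    ring
  have hcga : c < g a := by
    rw [hga, hcdef, div_lt_div_iff₀ hL0 (by positivity)]
    have key : (M + 1) ^ (m + 1) < lam ^ 2 * ((M + 2) * M ^ m) := by
      rw [hAdef, div_lt_iff₀ (by positivity)] at hlam2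
      linarith
    have hMm : (0:ℝ) < M ^ m := by positivity
    nlinarith [key]
  -- continuity and derivative of g
  have hg_cont : Continuous g := by
    rw [hgdef]; exact (continuous_pow m).sub (continuous_pow (m + 1))
  have hderiv : ∀ x : ℝ, deriv g x = m * x ^ (m - 1) - (m + 1) * x ^ m := by
    intro x
    have := ((hasDerivAt_pow m x).sub (hasDerivAt_pow (m + 1) x)).deriv
    simpa [hgdef] using this
  have hmono : StrictMonoOn g (Set.Icc 0 a) := by
    apply strictMonoOn_of_deriv_pos (convex_Icc 0 a) hg_cont.continuousOn
    intro x hx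
    rw [interior_Icc] at hx
    obtain ⟨hx0, hxa⟩ := hx
    rw [hderiv]
    have h1 : x ^ m = x ^ (m - 1) * x := by rw [← pow_succ]; congr 1; omega
    have h2 : (0:ℝ) < x ^ (m - 1) := pow_pos hx0 _
    have h3 : (M + 1) * x < M := by
      rw [hadef, lt_div_iff₀ (by linarith)] at hxa
      linarith
    rw [h1]
    push_cast
    nlinarith [mul_pos h2 (show (0:ℝ) < M - (M + 1) * x by linarith)]
  have hanti : StrictAntiOn g (Set.Icc a 1) := by
    apply strictAntiOn_of_deriv_neg (convex_Icc a 1) hg_cont.continuousOn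
    intro x hx
    rw [interior_Icc] at hx
    obtain ⟨hxa, hx1⟩ := hx
    rw [hderiv]
    have hx0 : 0 < x := lt_trans ha0 hxa
    have h1 : x ^ m = x ^ (m - 1) * x := by rw [← pow_succ]; congr 1; omega
    have h2 : (0:ℝ) < x ^ (m - 1) := pow_pos hx0 _
    have h3 : M < (M + 1) * x := by
      rw [hadef, div_lt_iff₀ (by linarith)] at hxa
      linarith
    rw [h1]
    push_cast
    nlinarith [mul_pos h2 (show (0:ℝ) < (M + 1) * x - M by linarith)]
  -- IVT
  have hg0 : g 0 = 0 := by
    simp [hgdef, zero_pow (by omega : m ≠ 0)]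
  have hg1 : g 1 = 0 := by simp [hgdef]
  obtain ⟨qu, hqu, hgqu⟩ : ∃ qu ∈ Set.Ioo (0:ℝ) a, g qu = c := by
    have := intermediate_value_Ioo (le_of_lt ha0) hg_cont.continuousOn
      (show c ∈ Set.Ioo (g 0) (g a) by rw [hg0]; exact ⟨hc0, hcga⟩)
    obtain ⟨x, hx, hgx⟩ := this
    exact ⟨x, hx, hgx⟩
  obtain ⟨qs, hqs, hgqs⟩ : ∃ qs ∈ Set.Ioo a (1:ℝ), g qs = c := by
    have := intermediate_value_Ioo' (le_of_lt ha1) hg_cont.continuousOn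
      (show c ∈ Set.Ioo (g 1) (g a) by rw [hg1]; exact ⟨hc0, hcga⟩)
    obtain ⟨x, hx, hgx⟩ := this
    exact ⟨x, hx, hgx⟩
  have hzero : ∀ q : ℝ, g q = c → h q = 0 := by
    intro q hq
    rw [hrel, hq, hcdef]
    field_simp
    ring
  have hcast : ((↑(m + 2) : ℝ) - 2) / ((↑(m + 2) : ℝ) - 1) = a := by
    rw [hadef]; push_cast; ring_nf
    rfl
  refine ⟨qu, qs, ⟨hqu.1, lt_trans hqu.2 ha1⟩, ⟨lt_trans ha0 hqs.1, hqs.2⟩,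
    lt_trans hqu.2 hqs.1, hzero qu hgqu, hzero qs hgqs, ?_, ?_, ?_⟩
  · rw [hcast]; exact hqu.2
  · rw [hcast]; exact hqs.1
  · intro q hq hq0
    have hgq : g q = c := by
      rw [hrel] at hq0
      rcases mul_eq_zero.mp hq0 with h' | h'
      · exact absurd h' (ne_of_gt hq.1)
      · have h1 : L * g q = 1 := by linarith
        rw [hcdef]
        exact eq_one_div_of_mul_eq_one_left (by linarith [h1] : g q * L = 1)
    rcases le_or_gt q a with hqa | hqa
    · left
      exact hmono.injOn ⟨hq.1.le, hqa⟩ ⟨hqu.1.le, hqu.2.le⟩ (hgq.trans hgqu.symm)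
    · right
      exact hanti.injOn ⟨hqa.le, hq.2.le⟩ ⟨hqs.1.le, hqs.2.le⟩ (hgq.trans hgqs.symm)
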